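/- arXiv:1001.2786 — 6 statements merged into one kernel-verified Lean document; each statement's English description precedes it below -/
import Mathlib

section
/- Let g11, g12, g21, g22, p1, p2 be nonnegative reals with g12 ≥ g22 (strong interference at receiver 1). Then for all α1, α2 ∈ [0,1]: C((g11·p1 + (1−α2)·g12·p2)/(1 + α2·g12·p2)) + C(α2·g22·p2/(1 + α1·g21·p1)) ≤ C(g11·p1 + g12·p2). In particular, the integrand of the Han–Kobayashi sum-rate bound S2 is maximized by sending only common messages (α1 = α2 = 0) in every strong sub-channel. -/
/-- `C(x) = log₂(1+x)`. -/
noncomputable def C (x : ℝ) : ℝ := Real.logb 2 (1 + x)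

/-- Under strong interference at receiver 1 (`g12 ≥ g22`), the integrand of the
Han–Kobayashi sum-rate bound `S2` is at most its value at `α1 = α2 = 0` (only common messages),
namely `C(g11 p1 + g12 p2)`. -/
theorem stmt1 (g11 g12 g21 g22 p1 p2 α1 α2 : ℝ)
    (hg11 : 0 ≤ g11) (hg12 : 0 ≤ g12) (hg21 : 0 ≤ g21) (hg22 : 0 ≤ g22)
    (hp1 : 0 ≤ p1) (hp2 : 0 ≤ p2)
    (hstrong : g22 ≤ g12)
    (hα1 : α1 ∈ Set.Icc (0 : ℝ) 1) (hα2 : α2 ∈ Set.Icc (0 : ℝ) 1) :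
    C ((g11 * p1 + (1 - α2) * g12 * p2) / (1 + α2 * g12 * p2))
        + C (α2 * g22 * p2 / (1 + α1 * g21 * p1))
      ≤ C (g11 * p1 + g12 * p2) := by
  obtain ⟨ha1, hb1⟩ := hα1
  obtain ⟨ha2, hb2⟩ := hα2
  have hx2 : 0 ≤ α2 * g12 * p2 := by positivity
  have hD1 : (0:ℝ) < 1 + α2 * g12 * p2 := by linarith
  have hD2 : (0:ℝ) < 1 + α1 * g21 * p1 := by positivity
  have hT : 0 ≤ g11 * p1 + g12 * p2 := by positivity
  have hTpos : (0:ℝ) < 1 + (g11 * p1 + g12 * p2) := by linarith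
  have h1 : 1 + (g11 * p1 + (1 - α2) * g12 * p2) / (1 + α2 * g12 * p2)
      = (1 + (g11 * p1 + g12 * p2)) / (1 + α2 * g12 * p2) := by
    field_simp; ring
  have hnum : 0 ≤ α2 * g22 * p2 := by positivity
  have h2 : 1 + α2 * g22 * p2 / (1 + α1 * g21 * p1) ≤ 1 + α2 * g12 * p2 := by
    have h1' : (1:ℝ) ≤ 1 + α1 * g21 * p1 := by nlinarith [mul_nonneg (mul_nonneg ha1 hg21) hp1]
    have := div_le_self hnum h1'
    have hle : α2 * g22 * p2 ≤ α2 * g12 * p2 :=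
      mul_le_mul_of_nonneg_right (mul_le_mul_of_nonneg_left hstrong ha2) hp2
    linarith
  have hpos2 : (0:ℝ) < 1 + α2 * g22 * p2 / (1 + α1 * g21 * p1) := by positivity
  unfold C
  rw [h1, Real.logb_div (by positivity) (by positivity)]
  have hlog1 : Real.logb 2 (1 + α2 * g22 * p2 / (1 + α1 * g21 * p1))
      ≤ Real.logb 2 (1 + α2 * g12 * p2) :=
    (Real.logb_le_logb (by norm_num) hpos2 hD1).mpr h2
  linarith
end

section
/- Suppose g12 ≥ g22 μ-almost everywhere and g21 ≥ g11 μ-almost everywhere (uniformly strong IFC). Then S4(0,p) ≥ S1(0,p), S5(0,p) ≥ min(S1(0,p), S2(0,p)), and S6(0,p) ≥ min(S1(0,p), S3(0,p)); consequently min over j ∈ {1,...,6} of S_j(0,p) equals min(S1(0,p), S2(0,p), S3(0,p)). -/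
open MeasureTheory

lemma C_mono {x y : ℝ} (hx : 0 ≤ x) (h : x ≤ y) : C x ≤ C y :=
  Real.logb_le_logb_of_le one_lt_two (by linarith) (by linarith)

/-- For a uniformly strong ergodic fading IFC (`g12 ≥ g22` and `g21 ≥ g11` a.e.),
with all-common power split, `S4(0,p) ≥ S1(0,p)`, `S5(0,p) ≥ min(S1(0,p), S2(0,p))`,
`S6(0,p) ≥ min(S1(0,p), S3(0,p))`, and consequently
`min_{j∈{1,…,6}} S_j(0,p) = min(S1(0,p), S2(0,p), S3(0,p))`. -/
theorem stmt2 {Ω : Type*} [MeasurableSpace Ω] (μ : Measure Ω) [IsProbabilityMeasure μ]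
    (g11 g12 g21 g22 p1 p2 : Ω → ℝ)
    (hg11 : Measurable g11) (hg12 : Measurable g12)
    (hg21 : Measurable g21) (hg22 : Measurable g22)
    (hp1 : Measurable p1) (hp2 : Measurable p2)
    (hg11n : ∀ ω, 0 ≤ g11 ω) (hg12n : ∀ ω, 0 ≤ g12 ω)
    (hg21n : ∀ ω, 0 ≤ g21 ω) (hg22n : ∀ ω, 0 ≤ g22 ω)
    (hp1n : ∀ ω, 0 ≤ p1 ω) (hp2n : ∀ ω, 0 ≤ p2 ω)
    (hUS1 : ∀ᵐ ω ∂μ, g22 ω ≤ g12 ω) (hUS2 : ∀ᵐ ω ∂μ, g11 ω ≤ g21 ω)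
    (hI1 : Integrable (fun ω => C (g11 ω * p1 ω)) μ)
    (hI2 : Integrable (fun ω => C (g22 ω * p2 ω)) μ)
    (hI3 : Integrable (fun ω => C (g11 ω * p1 ω + g12 ω * p2 ω)) μ)
    (hI4 : Integrable (fun ω => C (g21 ω * p1 ω + g22 ω * p2 ω)) μ)
    (hI5 : Integrable (fun ω => C (g12 ω * p2 ω)) μ)
    (hI6 : Integrable (fun ω => C (g21 ω * p1 ω)) μ)
    (S1 S2 S3 S4 S5 S6 : ℝ)
    (hS1 : S1 = (∫ ω, C (g11 ω * p1 ω) ∂μ) + ∫ ω, C (g22 ω * p2 ω) ∂μ)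
    (hS2 : S2 = ∫ ω, C (g11 ω * p1 ω + g12 ω * p2 ω) ∂μ)
    (hS3 : S3 = ∫ ω, C (g21 ω * p1 ω + g22 ω * p2 ω) ∂μ)
    (hS4 : S4 = (∫ ω, C (g12 ω * p2 ω) ∂μ) + ∫ ω, C (g21 ω * p1 ω) ∂μ)
    (hS5 : S5 = ((∫ ω, C (g11 ω * p1 ω + g12 ω * p2 ω) ∂μ)
        + (∫ ω, C (g21 ω * p1 ω) ∂μ) + ∫ ω, C (g22 ω * p2 ω) ∂μ) / 2)
    (hS6 : S6 = ((∫ ω, C (g21 ω * p1 ω + g22 ω * p2 ω) ∂μ)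
        + (∫ ω, C (g12 ω * p2 ω) ∂μ) + ∫ ω, C (g11 ω * p1 ω) ∂μ) / 2) :
    S1 ≤ S4 ∧ min S1 S2 ≤ S5 ∧ min S1 S3 ≤ S6 ∧
      min S1 (min S2 (min S3 (min S4 (min S5 S6)))) = min S1 (min S2 S3) := by
  have hA6 : (∫ ω, C (g11 ω * p1 ω) ∂μ) ≤ ∫ ω, C (g21 ω * p1 ω) ∂μ := by
    refine integral_mono_ae hI1 hI6 (hUS2.mono fun ω h => ?_)
    exact C_mono (mul_nonneg (hg11n ω) (hp1n ω)) (mul_le_mul_of_nonneg_right h (hp1n ω))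
  have hB5 : (∫ ω, C (g22 ω * p2 ω) ∂μ) ≤ ∫ ω, C (g12 ω * p2 ω) ∂μ := by
    refine integral_mono_ae hI2 hI5 (hUS1.mono fun ω h => ?_)
    exact C_mono (mul_nonneg (hg22n ω) (hp2n ω)) (mul_le_mul_of_nonneg_right h (hp2n ω))
  have h14 : S1 ≤ S4 := by rw [hS1, hS4]; linarith
  have h5 : min S1 S2 ≤ S5 := by
    rcases le_total S1 S2 with h | h <;>
      [rw [min_eq_left h]; rw [min_eq_right h]] <;> rw [hS1, hS2, hS5] at * <;> linarith
  have h6 : min S1 S3 ≤ S6 := by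
    rcases le_total S1 S3 with h | h <;>
      [rw [min_eq_left h]; rw [min_eq_right h]] <;> rw [hS1, hS3, hS6] at * <;> linarith
  refine ⟨h14, h5, h6, le_antisymm ?_ ?_⟩
  · exact min_le_min le_rfl (min_le_min le_rfl (min_le_left _ _))
  · refine le_min (min_le_left _ _) (le_min ?_ (le_min ?_ (le_min ?_ (le_min ?_ ?_))))
    · exact (min_le_right _ _).trans (min_le_left _ _)
    · exact (min_le_right _ _).trans (min_le_right _ _)
    · exact (min_le_left _ _).trans h14
    · exact (le_min (min_le_left _ _) ((min_le_right _ _).trans (min_le_left _ _))).trans h5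
    · exact (le_min (min_le_left _ _) ((min_le_right _ _).trans (min_le_right _ _))).trans h6
end

section
/- If S1(0,p) < S2(0,p) and S1(0,p) < S3(0,p), then S1(0,p) < S_m(0,p) for every m ∈ {4, 5, 6}; consequently min over j ∈ {1,...,6} of S_j(0,p) = S1(0,p). That is, the ergodic-very-strong condition against the two multiple-access sum-rate bounds automatically implies the remaining Han–Kobayashi sum-rate bounds are not active. -/
open MeasureTheory

lemma C_subadd {a b : ℝ} (ha : 0 ≤ a) (hb : 0 ≤ b) : C (a + b) ≤ C a + C b := by
  unfold C
  rw [← Real.logb_mul (by nlinarith) (by nlinarith)]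
  have : (1:ℝ) + (a+b) ≤ (1+a)*(1+b) := by nlinarith
  exact Real.logb_le_logb_of_le one_lt_two (by nlinarith) this

/-- If `S1(0,p) < S2(0,p)` and `S1(0,p) < S3(0,p)` (the ergodic-very-strong
condition against the two multiple-access sum-rate bounds), then `S1(0,p) < S_m(0,p)` for
every `m ∈ {4,5,6}`; consequently `min_{j∈{1,…,6}} S_j(0,p) = S1(0,p)`. -/
theorem stmt4 {Ω : Type*} [MeasurableSpace Ω] (μ : Measure Ω) [IsProbabilityMeasure μ]
    (g11 g12 g21 g22 p1 p2 : Ω → ℝ)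
    (hg11 : Measurable g11) (hg12 : Measurable g12)
    (hg21 : Measurable g21) (hg22 : Measurable g22)
    (hp1 : Measurable p1) (hp2 : Measurable p2)
    (hg11n : ∀ ω, 0 ≤ g11 ω) (hg12n : ∀ ω, 0 ≤ g12 ω)
    (hg21n : ∀ ω, 0 ≤ g21 ω) (hg22n : ∀ ω, 0 ≤ g22 ω)
    (hp1n : ∀ ω, 0 ≤ p1 ω) (hp2n : ∀ ω, 0 ≤ p2 ω)
    (hI1 : Integrable (fun ω => C (g11 ω * p1 ω)) μ)
    (hI2 : Integrable (fun ω => C (g22 ω * p2 ω)) μ)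
    (hI3 : Integrable (fun ω => C (g11 ω * p1 ω + g12 ω * p2 ω)) μ)
    (hI4 : Integrable (fun ω => C (g21 ω * p1 ω + g22 ω * p2 ω)) μ)
    (hI5 : Integrable (fun ω => C (g12 ω * p2 ω)) μ)
    (hI6 : Integrable (fun ω => C (g21 ω * p1 ω)) μ)
    (S1 S2 S3 S4 S5 S6 : ℝ)
    (hS1 : S1 = (∫ ω, C (g11 ω * p1 ω) ∂μ) + ∫ ω, C (g22 ω * p2 ω) ∂μ)
    (hS2 : S2 = ∫ ω, C (g11 ω * p1 ω + g12 ω * p2 ω) ∂μ)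
    (hS3 : S3 = ∫ ω, C (g21 ω * p1 ω + g22 ω * p2 ω) ∂μ)
    (hS4 : S4 = (∫ ω, C (g12 ω * p2 ω) ∂μ) + ∫ ω, C (g21 ω * p1 ω) ∂μ)
    (hS5 : S5 = ((∫ ω, C (g11 ω * p1 ω + g12 ω * p2 ω) ∂μ)
        + (∫ ω, C (g21 ω * p1 ω) ∂μ) + ∫ ω, C (g22 ω * p2 ω) ∂μ) / 2)
    (hS6 : S6 = ((∫ ω, C (g21 ω * p1 ω + g22 ω * p2 ω) ∂μ)
        + (∫ ω, C (g12 ω * p2 ω) ∂μ) + ∫ ω, C (g11 ω * p1 ω) ∂μ) / 2)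
    (hEVS1 : S1 < S2) (hEVS2 : S1 < S3) :
    S1 < S4 ∧ S1 < S5 ∧ S1 < S6 ∧
      min S1 (min S2 (min S3 (min S4 (min S5 S6)))) = S1 := by
  set E11 := ∫ ω, C (g11 ω * p1 ω) ∂μ
  set E22 := ∫ ω, C (g22 ω * p2 ω) ∂μ
  set E12 := ∫ ω, C (g12 ω * p2 ω) ∂μ
  set E21 := ∫ ω, C (g21 ω * p1 ω) ∂μ
  have hsub2 : S2 ≤ E11 + E12 := by
    rw [hS2, ← integral_add hI1 hI5]
    exact integral_mono hI3 (hI1.add hI5) (fun ω =>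
      C_subadd (mul_nonneg (hg11n ω) (hp1n ω)) (mul_nonneg (hg12n ω) (hp2n ω)))
  have hsub3 : S3 ≤ E21 + E22 := by
    rw [hS3, ← integral_add hI6 hI2]
    exact integral_mono hI4 (hI6.add hI2) (fun ω =>
      C_subadd (mul_nonneg (hg21n ω) (hp1n ω)) (mul_nonneg (hg22n ω) (hp2n ω)))
  have h1 : E22 < E12 := by linarith [hS1 ▸ hEVS1]
  have h2 : E11 < E21 := by linarith [hS1 ▸ hEVS2]
  have h4 : S1 < S4 := by rw [hS1, hS4]; linarith
  have h5 : S1 < S5 := by rw [hS2] at hEVS1; rw [hS5]; rw [hS1] at hEVS1 ⊢; linarith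
  have h6 : S1 < S6 := by rw [hS3] at hEVS2; rw [hS6]; rw [hS1] at hEVS2 ⊢; linarith
  refine ⟨h4, h5, h6, ?_⟩
  rw [min_eq_left]
  exact le_min hEVS1.le (le_min hEVS2.le (le_min h4.le (le_min h5.le h6.le)))
end

section
/- Let g12, g21, g22, p1, p2 be nonnegative reals with g22 ≥ (1 + g21·p1)·g12. Then for each fixed α1 ∈ [0,1], the function α2 ↦ C(α2·g22·p2/(1 + α1·g21·p1)) − log₂(1 + α2·g12·p2) is nondecreasing on [0,1], hence is maximized at α2 = 1. -/
lemma key_mono (a b : ℝ) (hb : 0 ≤ b) (hab : b ≤ a) :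
    MonotoneOn (fun α : ℝ => Real.logb 2 (1 + α * a) - Real.logb 2 (1 + α * b))
      (Set.Icc 0 1) := by
  intro x hx y hy hxy
  have ha : 0 ≤ a := le_trans hb hab
  have h1 : (0:ℝ) < 1 + x * a := by nlinarith [hx.1]
  have h2 : (0:ℝ) < 1 + y * a := by nlinarith [hy.1]
  have h3 : (0:ℝ) < 1 + x * b := by nlinarith [hx.1]
  have h4 : (0:ℝ) < 1 + y * b := by nlinarith [hy.1]
  simp only [sub_le_sub_iff]
  rw [← Real.logb_mul (ne_of_gt h1) (ne_of_gt h4),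
      ← Real.logb_mul (ne_of_gt h2) (ne_of_gt h3)]
  apply Real.logb_le_logb_of_le (by norm_num) (by positivity)
  nlinarith [mul_nonneg (sub_nonneg.2 hxy) (sub_nonneg.2 hab)]

/-- If `g22 ≥ (1 + g21 p1) g12` (condition (UW_C1)), then for each fixed
`α1 ∈ [0,1]`, the map `α2 ↦ C(α2 g22 p2/(1 + α1 g21 p1)) − log₂(1 + α2 g12 p2)` is
nondecreasing on `[0,1]`, hence maximized at `α2 = 1`. -/
theorem stmt8 (g12 g21 g22 p1 p2 : ℝ)
    (hg12 : 0 ≤ g12) (hg21 : 0 ≤ g21) (hg22 : 0 ≤ g22)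
    (hp1 : 0 ≤ p1) (hp2 : 0 ≤ p2)
    (hUW : (1 + g21 * p1) * g12 ≤ g22)
    (α1 : ℝ) (hα1 : α1 ∈ Set.Icc (0 : ℝ) 1) :
    MonotoneOn (fun α2 : ℝ =>
        C (α2 * g22 * p2 / (1 + α1 * g21 * p1)) - Real.logb 2 (1 + α2 * g12 * p2))
      (Set.Icc 0 1)
    ∧ ∀ α2 ∈ Set.Icc (0 : ℝ) 1,
        C (α2 * g22 * p2 / (1 + α1 * g21 * p1)) - Real.logb 2 (1 + α2 * g12 * p2)
          ≤ C (g22 * p2 / (1 + α1 * g21 * p1)) - Real.logb 2 (1 + g12 * p2) := by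
  obtain ⟨h0, h1⟩ := hα1
  set D : ℝ := 1 + α1 * g21 * p1 with hD
  have hDpos : 0 < D := by rw [hD]; positivity
  set a : ℝ := g22 * p2 / D with ha
  set b : ℝ := g12 * p2 with hb
  have hbnn : 0 ≤ b := by positivity
  have hDle : D ≤ 1 + g21 * p1 := by rw [hD]; nlinarith [mul_nonneg hg21 hp1]
  have hab : b ≤ a := by
    rw [ha, le_div_iff₀ hDpos]
    calc b * D ≤ g12 * p2 * (1 + g21 * p1) := by
          rw [hb]; exact mul_le_mul_of_nonneg_left hDle (by positivity)
      _ ≤ g22 * p2 := by nlinarith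
  have heq : (fun α2 : ℝ =>
      C (α2 * g22 * p2 / D) - Real.logb 2 (1 + α2 * g12 * p2))
      = fun α : ℝ => Real.logb 2 (1 + α * a) - Real.logb 2 (1 + α * b) := by
    funext α
    simp only [C, ha, hb]
    ring_nf
  have hmono := key_mono a b hbnn hab
  rw [heq]
  refine ⟨hmono, fun α2 hα2 => ?_⟩
  have h := hmono hα2 (Set.mem_Icc.2 ⟨zero_le_one, le_refl 1⟩) hα2.2
  simp only [one_mul] at h
  have e1 : α2 * g22 * p2 / D = α2 * a := by rw [ha]; ring
  have e2 : α2 * g12 * p2 = α2 * b := by rw [hb]; ring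
  simp only [C, e1, e2, ha, hb]
  exact h
end

section
/- Let g11, g12, g21, g22, p1, p2 be nonnegative reals with g22 ≥ (1 + g21·p1)·g12 and g11 ≥ (1 + g12·p2)·g21. Then the function f(α1, α2) = log₂(1 + α1·g11·p1 + g12·p2) − log₂(1 + α2·g12·p2) + log₂(1 + α2·g22·p2 + g21·p1) − log₂(1 + α1·g21·p1) is nondecreasing in α1 and nondecreasing in α2 on [0,1]², hence is maximized at (α1, α2) = (1, 1). Moreover f(α1, α2) equals the integrand of the Han–Kobayashi sum-rate bound S4, i.e. f(α1,α2) = C((α1·g11·p1 + (1−α2)·g12·p2)/(1 + α2·g12·p2)) + C((α2·g22·p2 + (1−α1)·g21·p1)/(1 + α1·g21·p1)). -/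
/-- The integrand of the Han–Kobayashi sum-rate bound `S4`, in decomposed form. -/
noncomputable def f (g11 g12 g21 g22 p1 p2 α1 α2 : ℝ) : ℝ :=
  Real.logb 2 (1 + α1 * g11 * p1 + g12 * p2) - Real.logb 2 (1 + α2 * g12 * p2)
    + Real.logb 2 (1 + α2 * g22 * p2 + g21 * p1) - Real.logb 2 (1 + α1 * g21 * p1)

lemma mono_aux (A B Cc : ℝ) (hA : 0 ≤ A) (hB : 0 ≤ B) (hC : 0 ≤ Cc)
    (h : (1 + B) * Cc ≤ A) {a b : ℝ} (ha : 0 ≤ a) (hab : a ≤ b) :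
    Real.logb 2 (1 + a * A + B) - Real.logb 2 (1 + a * Cc)
      ≤ Real.logb 2 (1 + b * A + B) - Real.logb 2 (1 + b * Cc) := by
  have hb : 0 ≤ b := ha.trans hab
  have h1 : 0 < 1 + a * A + B := by positivity
  have h2 : 0 < 1 + a * Cc := by positivity
  have h3 : 0 < 1 + b * A + B := by positivity
  have h4 : 0 < 1 + b * Cc := by positivity
  have hprod : (1 + a * A + B) * (1 + b * Cc) ≤ (1 + b * A + B) * (1 + a * Cc) := by
    nlinarith [mul_le_mul_of_nonneg_left h (sub_nonneg.mpr hab)]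
  have hlog : Real.logb 2 ((1 + a * A + B) * (1 + b * Cc))
      ≤ Real.logb 2 ((1 + b * A + B) * (1 + a * Cc)) :=
    Real.logb_le_logb_of_le one_lt_two (by positivity) hprod
  rw [Real.logb_mul h1.ne' h4.ne', Real.logb_mul h3.ne' h2.ne'] at hlog
  linarith

/-- Under the uniformly weak conditions `g22 ≥ (1 + g21 p1) g12` (UW_C1) and
`g11 ≥ (1 + g12 p2) g21` (UW_C2), the function `f(α1, α2)` is nondecreasing in each argument
on `[0,1]²`, hence maximized at `(1,1)`; moreover `f` equals the integrand of the
Han–Kobayashi sum-rate bound `S4`. -/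
theorem stmt9 (g11 g12 g21 g22 p1 p2 : ℝ)
    (hg11 : 0 ≤ g11) (hg12 : 0 ≤ g12) (hg21 : 0 ≤ g21) (hg22 : 0 ≤ g22)
    (hp1 : 0 ≤ p1) (hp2 : 0 ≤ p2)
    (hUW1 : (1 + g21 * p1) * g12 ≤ g22)
    (hUW2 : (1 + g12 * p2) * g21 ≤ g11) :
    (∀ α2 ∈ Set.Icc (0 : ℝ) 1,
        MonotoneOn (fun α1 => f g11 g12 g21 g22 p1 p2 α1 α2) (Set.Icc 0 1))
    ∧ (∀ α1 ∈ Set.Icc (0 : ℝ) 1,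
        MonotoneOn (fun α2 => f g11 g12 g21 g22 p1 p2 α1 α2) (Set.Icc 0 1))
    ∧ (∀ α1 ∈ Set.Icc (0 : ℝ) 1, ∀ α2 ∈ Set.Icc (0 : ℝ) 1,
        f g11 g12 g21 g22 p1 p2 α1 α2 ≤ f g11 g12 g21 g22 p1 p2 1 1)
    ∧ (∀ α1 ∈ Set.Icc (0 : ℝ) 1, ∀ α2 ∈ Set.Icc (0 : ℝ) 1,
        f g11 g12 g21 g22 p1 p2 α1 α2
          = C ((α1 * g11 * p1 + (1 - α2) * g12 * p2) / (1 + α2 * g12 * p2))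
            + C ((α2 * g22 * p2 + (1 - α1) * g21 * p1) / (1 + α1 * g21 * p1))) := by
  have hm1 : ∀ α2 ∈ Set.Icc (0 : ℝ) 1,
      MonotoneOn (fun α1 => f g11 g12 g21 g22 p1 p2 α1 α2) (Set.Icc 0 1) := by
    intro α2 _ a ha b _ hab
    have key := mono_aux (g11 * p1) (g12 * p2) (g21 * p1)
      (by positivity) (by positivity) (by positivity)
      (by nlinarith) ha.1 hab
    simp only [← mul_assoc] at key
    simp only [f]
    linarith
  have hm2 : ∀ α1 ∈ Set.Icc (0 : ℝ) 1,
      MonotoneOn (fun α2 => f g11 g12 g21 g22 p1 p2 α1 α2) (Set.Icc 0 1) := by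
    intro α1 _ a ha b _ hab
    have key := mono_aux (g22 * p2) (g21 * p1) (g12 * p2)
      (by positivity) (by positivity) (by positivity)
      (by nlinarith) ha.1 hab
    simp only [← mul_assoc] at key
    simp only [f]
    linarith
  refine ⟨hm1, hm2, ?_, ?_⟩
  · intro α1 h1 α2 h2
    have s1 : f g11 g12 g21 g22 p1 p2 α1 α2 ≤ f g11 g12 g21 g22 p1 p2 1 α2 :=
      hm1 α2 h2 h1 (Set.mem_Icc.mpr ⟨zero_le_one, le_refl 1⟩) h1.2
    have s2 : f g11 g12 g21 g22 p1 p2 1 α2 ≤ f g11 g12 g21 g22 p1 p2 1 1 :=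
      hm2 1 (Set.mem_Icc.mpr ⟨zero_le_one, le_refl 1⟩) h2
        (Set.mem_Icc.mpr ⟨zero_le_one, le_refl 1⟩) h2.2
    linarith
  · intro α1 h1 α2 h2
    have ha1 : 0 ≤ α1 := h1.1
    have ha2 : 0 ≤ α2 := h2.1
    have d1 : 0 < 1 + α2 * g12 * p2 := by positivity
    have d2 : 0 < 1 + α1 * g21 * p1 := by positivity
    have n1 : 0 < 1 + α1 * g11 * p1 + g12 * p2 := by positivity
    have n2 : 0 < 1 + α2 * g22 * p2 + g21 * p1 := by positivity
    have e1 : 1 + (α1 * g11 * p1 + (1 - α2) * g12 * p2) / (1 + α2 * g12 * p2)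
        = (1 + α1 * g11 * p1 + g12 * p2) / (1 + α2 * g12 * p2) := by
      field_simp; ring
    have e2 : 1 + (α2 * g22 * p2 + (1 - α1) * g21 * p1) / (1 + α1 * g21 * p1)
        = (1 + α2 * g22 * p2 + g21 * p1) / (1 + α1 * g21 * p1) := by
      field_simp; ring
    simp only [f, C, e1, e2, Real.logb_div n1.ne' d1.ne', Real.logb_div n2.ne' d2.ne']
    ring
end

section
/- Suppose that μ-almost everywhere g21 > g11 (receiver 2 sees uniformly strong interference) and g12 < g22 (receiver 1 sees uniformly weak interference) — the uniformly mixed conditions. Let α* denote the power-split policy (α1 ≡ 0, α2 ≡ 1). Then for every power-split policy (α1, α2), min over j ∈ {1,...,6} of S_j(α,p) ≤ min over j ∈ {1,...,6} of S_j(α*,p) = min(S2(α*,p), S3(α*,p)) = min( E[C(g11 p1/(1 + g12 p2))] + E[C(g22 p2)], E[C(g21 p1 + g22 p2)] ). -/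
open MeasureTheory

variable {Ω : Type*} [MeasurableSpace Ω]

/-- Han–Kobayashi sum-rate bound `S1(α,p)` (sum of the two individual-rate bounds). -/
noncomputable def S1 (μ : Measure Ω) (g11 g12 g21 g22 p1 p2 a1 a2 : Ω → ℝ) : ℝ :=
  (∫ ω, C (g11 ω * p1 ω / (1 + a2 ω * g12 ω * p2 ω)) ∂μ)
    + ∫ ω, C (g22 ω * p2 ω / (1 + a1 ω * g21 ω * p1 ω)) ∂μ

/-- Han–Kobayashi sum-rate bound `S2(α,p)`. -/
noncomputable def S2 (μ : Measure Ω) (g11 g12 g21 g22 p1 p2 a1 a2 : Ω → ℝ) : ℝ :=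
  (∫ ω, C ((g11 ω * p1 ω + (1 - a2 ω) * g12 ω * p2 ω) / (1 + a2 ω * g12 ω * p2 ω)) ∂μ)
    + ∫ ω, C (a2 ω * g22 ω * p2 ω / (1 + a1 ω * g21 ω * p1 ω)) ∂μ

/-- Han–Kobayashi sum-rate bound `S3(α,p)`: `S2` with the roles of the two users swapped. -/
noncomputable def S3 (μ : Measure Ω) (g11 g12 g21 g22 p1 p2 a1 a2 : Ω → ℝ) : ℝ :=
  S2 μ g22 g21 g12 g11 p2 p1 a2 a1

/-- Han–Kobayashi sum-rate bound `S4(α,p)`. -/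
noncomputable def S4 (μ : Measure Ω) (g11 g12 g21 g22 p1 p2 a1 a2 : Ω → ℝ) : ℝ :=
  (∫ ω, C ((a1 ω * g11 ω * p1 ω + (1 - a2 ω) * g12 ω * p2 ω) / (1 + a2 ω * g12 ω * p2 ω)) ∂μ)
    + ∫ ω, C ((a2 ω * g22 ω * p2 ω + (1 - a1 ω) * g21 ω * p1 ω) / (1 + a1 ω * g21 ω * p1 ω)) ∂μ

/-- Han–Kobayashi sum-rate bound `S5(α,p)` (the `2R1 + R2` bound combined with `R2`). -/
noncomputable def S5 (μ : Measure Ω) (g11 g12 g21 g22 p1 p2 a1 a2 : Ω → ℝ) : ℝ :=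
  ((∫ ω, C ((g11 ω * p1 ω + (1 - a2 ω) * g12 ω * p2 ω) / (1 + a2 ω * g12 ω * p2 ω)) ∂μ)
    + (∫ ω, C (a1 ω * g11 ω * p1 ω / (1 + a2 ω * g12 ω * p2 ω)) ∂μ)
    + (∫ ω, C ((a2 ω * g22 ω * p2 ω + (1 - a1 ω) * g21 ω * p1 ω) / (1 + a1 ω * g21 ω * p1 ω)) ∂μ)
    + ∫ ω, C (g22 ω * p2 ω / (1 + a1 ω * g21 ω * p1 ω)) ∂μ) / 2

/-- Han–Kobayashi sum-rate bound `S6(α,p)`: `S5` with the roles of the two users swapped. -/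
noncomputable def S6 (μ : Measure Ω) (g11 g12 g21 g22 p1 p2 a1 a2 : Ω → ℝ) : ℝ :=
  S5 μ g22 g21 g12 g11 p2 p1 a2 a1

/-- The Han–Kobayashi sum-rate bound: `min` over `j ∈ {1,…,6}` of `S_j(α,p)`. -/
noncomputable def minS (μ : Measure Ω) (g11 g12 g21 g22 p1 p2 a1 a2 : Ω → ℝ) : ℝ :=
  min (S1 μ g11 g12 g21 g22 p1 p2 a1 a2)
    (min (S2 μ g11 g12 g21 g22 p1 p2 a1 a2)
      (min (S3 μ g11 g12 g21 g22 p1 p2 a1 a2)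
        (min (S4 μ g11 g12 g21 g22 p1 p2 a1 a2)
          (min (S5 μ g11 g12 g21 g22 p1 p2 a1 a2) (S6 μ g11 g12 g21 g22 p1 p2 a1 a2)))))

section Aux

lemma C_zero : C 0 = 0 := by simp [C]

lemma C_nonneg {x : ℝ} (hx : 0 ≤ x) : 0 ≤ C x :=
  Real.logb_nonneg one_lt_two (by linarith)

lemma C_le_C {x y : ℝ} (hx : 0 ≤ x) (hxy : x ≤ y) : C x ≤ C y :=
  Real.logb_le_logb_of_le one_lt_two (by linarith) (by linarith)

lemma C_add_C {u v : ℝ} (hu : 0 ≤ u) (hv : 0 ≤ v) :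
    C u + C v = Real.logb 2 ((1 + u) * (1 + v)) := by
  rw [Real.logb_mul (by positivity) (by positivity)]; rfl

lemma C_add_le {u1 u2 v1 v2 : ℝ} (hu1 : 0 ≤ u1) (hu2 : 0 ≤ u2)
    (hv1 : 0 ≤ v1) (hv2 : 0 ≤ v2)
    (h : (1 + u1) * (1 + u2) ≤ (1 + v1) * (1 + v2)) :
    C u1 + C u2 ≤ C v1 + C v2 := by
  rw [C_add_C hu1 hu2, C_add_C hv1 hv2]
  exact Real.logb_le_logb_of_le one_lt_two (by positivity) h

/-- Pointwise inequality giving `S2(α) ≤ S2(α*)` under weak interference `b ≤ d`. -/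
lemma ptL2 {x b d e a1 a2 : ℝ} (hx : 0 ≤ x) (hb : 0 ≤ b) (hbd : b ≤ d)
    (he : 0 ≤ e) (h10 : 0 ≤ a1) (h20 : 0 ≤ a2) (h21 : a2 ≤ 1) :
    C ((x + (1 - a2) * b) / (1 + a2 * b)) + C (a2 * d / (1 + a1 * e))
      ≤ C (x / (1 + b)) + C d := by
  have hd : 0 ≤ d := le_trans hb hbd
  have hD1 : (0:ℝ) < 1 + a2 * b := by positivity
  have hD2 : (1:ℝ) ≤ 1 + a1 * e := by nlinarith
  have hD3 : (0:ℝ) < 1 + b := by linarith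
  have hnum1 : (0:ℝ) ≤ x + (1 - a2) * b := by nlinarith
  apply C_add_le (div_nonneg hnum1 (le_of_lt hD1)) (by positivity) (by positivity) hd
  have e1 : 1 + (x + (1 - a2) * b) / (1 + a2 * b) = (1 + x + b) / (1 + a2 * b) := by
    field_simp; ring
  have e3 : 1 + x / (1 + b) = (1 + x + b) / (1 + b) := by
    field_simp; ring
  rw [e1, e3]
  have step1 : 1 + a2 * d / (1 + a1 * e) ≤ 1 + a2 * d := by
    have := div_le_self (by positivity : (0:ℝ) ≤ a2 * d) hD2
    linarith
  have hfac : (0:ℝ) ≤ (1 + x + b) / (1 + a2 * b) := by positivity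
  calc (1 + x + b) / (1 + a2 * b) * (1 + a2 * d / (1 + a1 * e))
      ≤ (1 + x + b) / (1 + a2 * b) * (1 + a2 * d) :=
        mul_le_mul_of_nonneg_left step1 hfac
    _ ≤ (1 + x + b) / (1 + b) * (1 + d) := by
        rw [div_mul_eq_mul_div, div_mul_eq_mul_div, div_le_div_iff₀ hD1 hD3]
        nlinarith [mul_nonneg (sub_nonneg.2 h21) (sub_nonneg.2 hbd),
          mul_le_mul_of_nonneg_left
            (show (1 + a2 * d) * (1 + b) ≤ (1 + d) * (1 + a2 * b) by
              nlinarith [mul_nonneg (sub_nonneg.2 h21) (sub_nonneg.2 hbd)])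
            (show (0:ℝ) ≤ 1 + x + b by linarith)]

/-- Pointwise inequality giving `S3(α) ≤ S3(α*)` under strong interference `x ≤ e`. -/
lemma ptL3 {x d e f a1 a2 : ℝ} (hx : 0 ≤ x) (hxe : x ≤ e) (hd : 0 ≤ d)
    (hf : 0 ≤ f) (h10 : 0 ≤ a1) (h11 : a1 ≤ 1) (h20 : 0 ≤ a2) :
    C ((d + (1 - a1) * e) / (1 + a1 * e)) + C (a1 * x / (1 + a2 * f))
      ≤ C (e + d) := by
  have he : 0 ≤ e := le_trans hx hxe
  have hD1 : (0:ℝ) < 1 + a1 * e := by positivity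
  have hD2 : (1:ℝ) ≤ 1 + a2 * f := by nlinarith
  have hnum1 : (0:ℝ) ≤ d + (1 - a1) * e := by nlinarith
  have h := C_add_le (u1 := (d + (1 - a1) * e) / (1 + a1 * e))
    (u2 := a1 * x / (1 + a2 * f)) (v1 := e + d) (v2 := 0)
    (div_nonneg hnum1 (le_of_lt hD1)) (by positivity) (by linarith) le_rfl ?_
  · simpa [C_zero] using h
  · have e1 : 1 + (d + (1 - a1) * e) / (1 + a1 * e) = (1 + e + d) / (1 + a1 * e) := by
      field_simp; ring
    rw [e1]
    have step1 : 1 + a1 * x / (1 + a2 * f) ≤ 1 + a1 * e := by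
      have h1 : a1 * x / (1 + a2 * f) ≤ a1 * x :=
        div_le_self (by positivity) hD2
      have h2 : a1 * x ≤ a1 * e := mul_le_mul_of_nonneg_left hxe h10
      linarith
    have hfac : (0:ℝ) ≤ (1 + e + d) / (1 + a1 * e) := by positivity
    calc (1 + e + d) / (1 + a1 * e) * (1 + a1 * x / (1 + a2 * f))
        ≤ (1 + e + d) / (1 + a1 * e) * (1 + a1 * e) :=
          mul_le_mul_of_nonneg_left step1 hfac
      _ = 1 + e + d := div_mul_cancel₀ _ (ne_of_gt hD1)
      _ = (1 + (e + d)) * (1 + 0) := by ring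

lemma measurable_C {f : Ω → ℝ} (hf : Measurable f) :
    Measurable fun ω => C (f ω) := by
  simp only [C, Real.logb]
  exact (Real.measurable_log.comp (measurable_const.add hf)).div_const _

lemma div_le_target {n d t : ℝ} (hn : 0 ≤ n) (hd : 1 ≤ d) (ht : n ≤ t) : n / d ≤ t :=
  le_trans (div_le_self hn hd) ht

lemma intC {μ : Measure Ω} {f g : Ω → ℝ} (hf : Measurable f)
    (h0 : ∀ ω, 0 ≤ f ω) (hle : ∀ ω, f ω ≤ g ω)
    (hI : Integrable (fun ω => C (g ω)) μ) :
    Integrable (fun ω => C (f ω)) μ := by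
  refine hI.mono' (measurable_C hf).aestronglyMeasurable (ae_of_all _ fun ω => ?_)
  rw [Real.norm_eq_abs, abs_of_nonneg (C_nonneg (h0 ω))]
  exact C_le_C (h0 ω) (hle ω)

lemma min6_eq (A B : ℝ) :
    min A (min A (min B (min B (min ((A + B) / 2) ((A + B) / 2))))) = min A B := by
  have hc : min A B ≤ (A + B) / 2 := by
    rcases le_total A B with h | h
    · have := min_le_left A B; linarith [min_eq_left h]
    · have := min_le_right A B; linarith [min_eq_right h]
  apply le_antisymm
  · exact le_min (min_le_left _ _)
      (le_trans (min_le_right _ _) (le_trans (min_le_right _ _) (min_le_left _ _)))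
  · exact le_min (min_le_left _ _) (le_min (min_le_left _ _)
      (le_min (min_le_right _ _) (le_min (min_le_right _ _)
        (le_min hc hc))))

end Aux

/-- For a uniformly mixed ergodic fading IFC (a.e. `g21 > g11` and `g12 < g22`),
with `α* = (α1 ≡ 0, α2 ≡ 1)`, for every power-split policy `(α1, α2)`,
`min_{j∈{1,…,6}} S_j(α,p) ≤ min_{j∈{1,…,6}} S_j(α*,p) = min(S2(α*,p), S3(α*,p))
  = min(E[C(g11 p1/(1 + g12 p2))] + E[C(g22 p2)], E[C(g21 p1 + g22 p2)])`. -/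
theorem stmt13 (μ : Measure Ω) [IsProbabilityMeasure μ]
    (g11 g12 g21 g22 p1 p2 : Ω → ℝ)
    (hg11 : Measurable g11) (hg12 : Measurable g12)
    (hg21 : Measurable g21) (hg22 : Measurable g22)
    (hp1 : Measurable p1) (hp2 : Measurable p2)
    (hg11n : ∀ ω, 0 ≤ g11 ω) (hg12n : ∀ ω, 0 ≤ g12 ω)
    (hg21n : ∀ ω, 0 ≤ g21 ω) (hg22n : ∀ ω, 0 ≤ g22 ω)
    (hp1n : ∀ ω, 0 ≤ p1 ω) (hp2n : ∀ ω, 0 ≤ p2 ω)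
    (hUM1 : ∀ᵐ ω ∂μ, g11 ω < g21 ω) (hUM2 : ∀ᵐ ω ∂μ, g12 ω < g22 ω)
    (hI1 : Integrable (fun ω => C (g11 ω * p1 ω + g12 ω * p2 ω)) μ)
    (hI2 : Integrable (fun ω => C (g21 ω * p1 ω + g22 ω * p2 ω)) μ)
    (a1 a2 : Ω → ℝ) (ha1 : Measurable a1) (ha2 : Measurable a2)
    (ha1r : ∀ ω, a1 ω ∈ Set.Icc (0 : ℝ) 1) (ha2r : ∀ ω, a2 ω ∈ Set.Icc (0 : ℝ) 1) :
    minS μ g11 g12 g21 g22 p1 p2 a1 a2 ≤ minS μ g11 g12 g21 g22 p1 p2 0 1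
    ∧ minS μ g11 g12 g21 g22 p1 p2 0 1
        = min (S2 μ g11 g12 g21 g22 p1 p2 0 1) (S3 μ g11 g12 g21 g22 p1 p2 0 1)
    ∧ min (S2 μ g11 g12 g21 g22 p1 p2 0 1) (S3 μ g11 g12 g21 g22 p1 p2 0 1)
        = min ((∫ ω, C (g11 ω * p1 ω / (1 + g12 ω * p2 ω)) ∂μ) + ∫ ω, C (g22 ω * p2 ω) ∂μ)
            (∫ ω, C (g21 ω * p1 ω + g22 ω * p2 ω) ∂μ) := by
  set EA : ℝ := (∫ ω, C (g11 ω * p1 ω / (1 + g12 ω * p2 ω)) ∂μ)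
      + ∫ ω, C (g22 ω * p2 ω) ∂μ with hEA
  set EB : ℝ := ∫ ω, C (g21 ω * p1 ω + g22 ω * p2 ω) ∂μ with hEB
  -- basic pointwise facts
  have ha10 : ∀ ω, 0 ≤ a1 ω := fun ω => (ha1r ω).1
  have ha11 : ∀ ω, a1 ω ≤ 1 := fun ω => (ha1r ω).2
  have ha20 : ∀ ω, 0 ≤ a2 ω := fun ω => (ha2r ω).1
  have ha21 : ∀ ω, a2 ω ≤ 1 := fun ω => (ha2r ω).2
  have hcomm : (∫ ω, C (g22 ω * p2 ω + g21 ω * p1 ω) ∂μ) = EB := by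
    rw [hEB]
    exact integral_congr_ae (ae_of_all _ fun ω => congrArg C (add_comm _ _))
  -- values of the six bounds at α*
  have es1 : S1 μ g11 g12 g21 g22 p1 p2 0 1 = EA := by
    simp only [S1, Pi.one_apply, Pi.zero_apply, one_mul, zero_mul, add_zero, div_one, hEA]
  have es2 : S2 μ g11 g12 g21 g22 p1 p2 0 1 = EA := by
    simp only [S2, Pi.one_apply, Pi.zero_apply, one_mul, zero_mul, add_zero, div_one,
      sub_self, hEA]
  have es3 : S3 μ g11 g12 g21 g22 p1 p2 0 1 = EB := by
    simp only [S3, S2, Pi.one_apply, Pi.zero_apply, one_mul, zero_mul, add_zero, div_one,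
      sub_zero, zero_div, C_zero, integral_zero]
    exact hcomm
  have es4 : S4 μ g11 g12 g21 g22 p1 p2 0 1 = EB := by
    simp only [S4, Pi.one_apply, Pi.zero_apply, one_mul, zero_mul, add_zero, zero_add,
      div_one, sub_zero, sub_self, zero_div, C_zero, integral_zero]
    exact hcomm
  have es5 : S5 μ g11 g12 g21 g22 p1 p2 0 1 = (EA + EB) / 2 := by
    simp only [S5, Pi.one_apply, Pi.zero_apply, one_mul, zero_mul, add_zero, zero_add,
      div_one, sub_zero, sub_self, zero_div, C_zero, integral_zero]
    rw [hcomm, hEA]; ring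
  have es6 : S6 μ g11 g12 g21 g22 p1 p2 0 1 = (EA + EB) / 2 := by
    simp only [S6, S5, Pi.one_apply, Pi.zero_apply, one_mul, zero_mul, add_zero, zero_add,
      div_one, sub_zero, sub_self, zero_div, C_zero, integral_zero]
    rw [hcomm, hEA]; ring
  have hstar : minS μ g11 g12 g21 g22 p1 p2 0 1 = min EA EB := by
    rw [minS, es1, es2, es3, es4, es5, es6, min6_eq]
  -- integrability of the relevant integrands
  have hnum : ∀ ω, (0:ℝ) ≤ g11 ω * p1 ω := fun ω => mul_nonneg (hg11n ω) (hp1n ω)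
  have hnum2 : ∀ ω, (0:ℝ) ≤ g12 ω * p2 ω := fun ω => mul_nonneg (hg12n ω) (hp2n ω)
  have hnum3 : ∀ ω, (0:ℝ) ≤ g21 ω * p1 ω := fun ω => mul_nonneg (hg21n ω) (hp1n ω)
  have hnum4 : ∀ ω, (0:ℝ) ≤ g22 ω * p2 ω := fun ω => mul_nonneg (hg22n ω) (hp2n ω)
  have hden1 : ∀ ω, (1:ℝ) ≤ 1 + a2 ω * g12 ω * p2 ω := fun ω => by
    have := mul_nonneg (mul_nonneg (ha20 ω) (hg12n ω)) (hp2n ω); linarith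
  have hden2 : ∀ ω, (1:ℝ) ≤ 1 + a1 ω * g21 ω * p1 ω := fun ω => by
    have := mul_nonneg (mul_nonneg (ha10 ω) (hg21n ω)) (hp1n ω); linarith
  have mden1 : Measurable fun ω => 1 + a2 ω * g12 ω * p2 ω :=
    measurable_const.add ((ha2.mul hg12).mul hp2)
  have mden2 : Measurable fun ω => 1 + a1 ω * g21 ω * p1 ω :=
    measurable_const.add ((ha1.mul hg21).mul hp1)
  have mf1 : Measurable fun ω =>
      (g11 ω * p1 ω + (1 - a2 ω) * g12 ω * p2 ω) / (1 + a2 ω * g12 ω * p2 ω) :=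
    ((hg11.mul hp1).add (((measurable_const.sub ha2).mul hg12).mul hp2)).div mden1
  have mf2 : Measurable fun ω => a2 ω * g22 ω * p2 ω / (1 + a1 ω * g21 ω * p1 ω) :=
    ((ha2.mul hg22).mul hp2).div mden2
  have mF1 : Measurable fun ω => g11 ω * p1 ω / (1 + g12 ω * p2 ω) :=
    (hg11.mul hp1).div (measurable_const.add (hg12.mul hp2))
  have mF2 : Measurable fun ω => g22 ω * p2 ω := hg22.mul hp2
  have mu1 : Measurable fun ω =>
      (g22 ω * p2 ω + (1 - a1 ω) * g21 ω * p1 ω) / (1 + a1 ω * g21 ω * p1 ω) :=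
    ((hg22.mul hp2).add (((measurable_const.sub ha1).mul hg21).mul hp1)).div mden2
  have mu2 : Measurable fun ω => a1 ω * g11 ω * p1 ω / (1 + a2 ω * g12 ω * p2 ω) :=
    ((ha1.mul hg11).mul hp1).div mden1
  have if1 : Integrable (fun ω =>
      C ((g11 ω * p1 ω + (1 - a2 ω) * g12 ω * p2 ω) / (1 + a2 ω * g12 ω * p2 ω))) μ := by
    refine intC mf1 (fun ω => ?_) (fun ω => ?_) hI1
    · have h1 : (0:ℝ) ≤ (1 - a2 ω) * g12 ω * p2 ω :=
        mul_nonneg (mul_nonneg (by linarith [ha21 ω]) (hg12n ω)) (hp2n ω)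
      exact div_nonneg (by linarith [hnum ω]) (by linarith [hden1 ω])
    · refine div_le_target ?_ (hden1 ω) ?_
      · have h1 : (0:ℝ) ≤ (1 - a2 ω) * g12 ω * p2 ω :=
          mul_nonneg (mul_nonneg (by linarith [ha21 ω]) (hg12n ω)) (hp2n ω)
        linarith [hnum ω]
      · have h1 : (1 - a2 ω) * g12 ω * p2 ω ≤ g12 ω * p2 ω := by
          have := mul_le_mul_of_nonneg_right
            (mul_le_mul_of_nonneg_right (show (1 - a2 ω) ≤ 1 by linarith [ha20 ω]) (hg12n ω))
            (hp2n ω)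
          simpa using this
        linarith
  have if2 : Integrable (fun ω =>
      C (a2 ω * g22 ω * p2 ω / (1 + a1 ω * g21 ω * p1 ω))) μ := by
    refine intC mf2 (fun ω => ?_) (fun ω => ?_) hI2
    · exact div_nonneg (mul_nonneg (mul_nonneg (ha20 ω) (hg22n ω)) (hp2n ω))
        (by linarith [hden2 ω])
    · refine div_le_target
        (mul_nonneg (mul_nonneg (ha20 ω) (hg22n ω)) (hp2n ω)) (hden2 ω) ?_
      have h1 : a2 ω * g22 ω * p2 ω ≤ g22 ω * p2 ω := by
        have := mul_le_mul_of_nonneg_right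
          (mul_le_mul_of_nonneg_right (ha21 ω) (hg22n ω)) (hp2n ω)
        simpa using this
      linarith [hnum3 ω]
  have iF1 : Integrable (fun ω => C (g11 ω * p1 ω / (1 + g12 ω * p2 ω))) μ := by
    refine intC mF1 (fun ω => ?_) (fun ω => ?_) hI1
    · exact div_nonneg (hnum ω) (by linarith [hnum2 ω])
    · exact div_le_target (hnum ω) (by linarith [hnum2 ω]) (by linarith [hnum2 ω])
  have iF2 : Integrable (fun ω => C (g22 ω * p2 ω)) μ :=
    intC mF2 hnum4 (fun ω => by linarith [hnum3 ω]) hI2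
  have iu1 : Integrable (fun ω =>
      C ((g22 ω * p2 ω + (1 - a1 ω) * g21 ω * p1 ω) / (1 + a1 ω * g21 ω * p1 ω))) μ := by
    refine intC mu1 (fun ω => ?_) (fun ω => ?_) hI2
    · have h1 : (0:ℝ) ≤ (1 - a1 ω) * g21 ω * p1 ω :=
        mul_nonneg (mul_nonneg (by linarith [ha11 ω]) (hg21n ω)) (hp1n ω)
      exact div_nonneg (by linarith [hnum4 ω]) (by linarith [hden2 ω])
    · refine div_le_target ?_ (hden2 ω) ?_
      · have h1 : (0:ℝ) ≤ (1 - a1 ω) * g21 ω * p1 ω :=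
          mul_nonneg (mul_nonneg (by linarith [ha11 ω]) (hg21n ω)) (hp1n ω)
        linarith [hnum4 ω]
      · have h1 : (1 - a1 ω) * g21 ω * p1 ω ≤ g21 ω * p1 ω := by
          have := mul_le_mul_of_nonneg_right
            (mul_le_mul_of_nonneg_right (show (1 - a1 ω) ≤ 1 by linarith [ha10 ω]) (hg21n ω))
            (hp1n ω)
          simpa using this
        linarith
  have iu2 : Integrable (fun ω =>
      C (a1 ω * g11 ω * p1 ω / (1 + a2 ω * g12 ω * p2 ω))) μ := by
    refine intC mu2 (fun ω => ?_) (fun ω => ?_) hI1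
    · exact div_nonneg (mul_nonneg (mul_nonneg (ha10 ω) (hg11n ω)) (hp1n ω))
        (by linarith [hden1 ω])
    · refine div_le_target
        (mul_nonneg (mul_nonneg (ha10 ω) (hg11n ω)) (hp1n ω)) (hden1 ω) ?_
      have h1 : a1 ω * g11 ω * p1 ω ≤ g11 ω * p1 ω := by
        have := mul_le_mul_of_nonneg_right
          (mul_le_mul_of_nonneg_right (ha11 ω) (hg11n ω)) (hp1n ω)
        simpa using this
      linarith [hnum2 ω]
  -- S2(α) ≤ EA
  have hS2A : S2 μ g11 g12 g21 g22 p1 p2 a1 a2 ≤ EA := by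
    rw [S2, hEA, ← integral_add if1 if2, ← integral_add iF1 iF2]
    refine integral_mono_ae (if1.add if2) (iF1.add iF2) ?_
    filter_upwards [hUM2] with ω h
    have key := ptL2 (x := g11 ω * p1 ω) (b := g12 ω * p2 ω) (d := g22 ω * p2 ω)
      (e := g21 ω * p1 ω) (a1 := a1 ω) (a2 := a2 ω)
      (hnum ω) (hnum2 ω) (mul_le_mul_of_nonneg_right h.le (hp2n ω))
      (hnum3 ω) (ha10 ω) (ha20 ω) (ha21 ω)
    simpa only [mul_assoc] using key
  -- S3(α) ≤ EB
  have hS3B : S3 μ g11 g12 g21 g22 p1 p2 a1 a2 ≤ EB := by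
    rw [S3, S2, hEB, ← integral_add iu1 iu2]
    refine integral_mono_ae (iu1.add iu2) hI2 ?_
    filter_upwards [hUM1] with ω h
    have key := ptL3 (x := g11 ω * p1 ω) (d := g22 ω * p2 ω) (e := g21 ω * p1 ω)
      (f := g12 ω * p2 ω) (a1 := a1 ω) (a2 := a2 ω)
      (hnum ω) (mul_le_mul_of_nonneg_right h.le (hp1n ω)) (hnum4 ω)
      (hnum2 ω) (ha10 ω) (ha11 ω) (ha20 ω)
    have key' : C ((g22 ω * p2 ω + (1 - a1 ω) * g21 ω * p1 ω) / (1 + a1 ω * g21 ω * p1 ω))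
        + C (a1 ω * g11 ω * p1 ω / (1 + a2 ω * g12 ω * p2 ω))
        ≤ C (g21 ω * p1 ω + g22 ω * p2 ω) := by
      simpa only [mul_assoc] using key
    exact key'
  refine ⟨?_, ?_, ?_⟩
  · rw [hstar]
    refine le_min (le_trans ?_ hS2A) (le_trans ?_ hS3B)
    · exact le_trans (min_le_right _ _) (min_le_left _ _)
    · exact le_trans (min_le_right _ _)
        (le_trans (min_le_right _ _) (min_le_left _ _))
  · rw [hstar, es2, es3]
  · rw [es2, es3]
end
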